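/- In the space of upper unitriangular 3×3 real matrices, write u = [[1, p, q], [0, 1, r], [0, 0, 1]], and let x_1(a) = I + a·E_{12}, x_2(a) = I + a·E_{23}. The set X = {u : p ≥ 0, q ≥ 0, r ≥ 0, p·r − q ≥ 0, and 2·q = p·r} is the disjoint union of the four sets: {I}; {x_1(a) : a > 0}; {x_2(a) : a > 0}; and {x_2(b)·x_1(a)·x_1(a)·x_2(b) : a > 0, b > 0}. -/

import Mathlib

/-- The Chevalley generator `x₁(a) = I + a·E₁₂` of the upper unitriangular subgroup of `SL₃(ℝ)`. -/
def x1 (a : ℝ) : Matrix (Fin 3) (Fin 3) ℝ := !![1, a, 0; 0, 1, 0; 0, 0, 1]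

/-- The Chevalley generator `x₂(a) = I + a·E₂₃` of the upper unitriangular subgroup of `SL₃(ℝ)`. -/
def x2 (a : ℝ) : Matrix (Fin 3) (Fin 3) ℝ := !![1, 0, 0; 0, 1, a; 0, 0, 1]

/-- `X = U^{+τ}_{≥0}` for `SL₃(ℝ)`: totally nonnegative unitriangular matrices fixed by `τ`. -/
def Xset : Set (Matrix (Fin 3) (Fin 3) ℝ) :=
  {u | ∃ p q r : ℝ, 0 ≤ p ∧ 0 ≤ q ∧ 0 ≤ r ∧ 0 ≤ p * r - q ∧ 2 * q = p * r ∧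
    u = !![1, p, q; 0, 1, r; 0, 0, 1]}

/-- The cell indexed by `w = 1`. -/
def C1 : Set (Matrix (Fin 3) (Fin 3) ℝ) := {(1 : Matrix (Fin 3) (Fin 3) ℝ)}

/-- The cell indexed by `w = s₁`. -/
def C2 : Set (Matrix (Fin 3) (Fin 3) ℝ) := {u | ∃ a : ℝ, 0 < a ∧ u = x1 a}

/-- The cell indexed by `w = s₂`. -/
def C3 : Set (Matrix (Fin 3) (Fin 3) ℝ) := {u | ∃ a : ℝ, 0 < a ∧ u = x2 a}

/-- The cell indexed by `w = s₁s₂s₁`. -/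
def C4 : Set (Matrix (Fin 3) (Fin 3) ℝ) :=
  {u | ∃ a b : ℝ, 0 < a ∧ 0 < b ∧ u = x2 b * x1 a * x1 a * x2 b}

lemma prod4 (a b : ℝ) :
    x2 b * x1 a * x1 a * x2 b = !![1, 2*a, 2*a*b; 0, 1, 2*b; 0, 0, 1] := by
  ext i j
  fin_cases i <;> fin_cases j <;>
    simp [x1, x2, Matrix.mul_apply, Fin.sum_univ_three, Matrix.vecHead, Matrix.vecTail]
  all_goals try ring
  all_goals norm_num

/-- Lusztig 2.1(b) for `SL₃(ℝ)`: `U^{+τ}_{≥0}` is the disjoint union of the four cells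
indexed by the involutions `1, s₁, s₂, s₁s₂s₁` of `S₃`. -/
theorem cell_decomposition_SL3 :
    Xset = C1 ∪ C2 ∪ C3 ∪ C4 ∧
    Disjoint C1 C2 ∧ Disjoint C1 C3 ∧ Disjoint C1 C4 ∧
    Disjoint C2 C3 ∧ Disjoint C2 C4 ∧ Disjoint C3 C4 := by
  have hone : (1 : Matrix (Fin 3) (Fin 3) ℝ) = !![1,0,0;0,1,0;0,0,1] :=
    Matrix.one_fin_three
  refine ⟨?_, ?_, ?_, ?_, ?_, ?_, ?_⟩
  · ext u
    constructor
    · rintro ⟨p, q, r, hp, hq, hr, hpq, h2q, rfl⟩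
      rcases eq_or_lt_of_le hp with hp0 | hp0
      · rcases eq_or_lt_of_le hr with hr0 | hr0
        · -- p = 0, r = 0 ⇒ q = 0
          have : q = 0 := by nlinarith
          left; left; left
          simp [C1, hone, ← hp0, ← hr0, this]
        · have hq0 : q = 0 := by nlinarith
          left; right
          exact ⟨r, hr0, by simp [x2, ← hp0, hq0]⟩
      · rcases eq_or_lt_of_le hr with hr0 | hr0
        · have hq0 : q = 0 := by nlinarith
          left; left; right
          exact ⟨p, hp0, by simp [x1, ← hr0, hq0]⟩
        · right
          refine ⟨p/2, r/2, by linarith, by linarith, ?_⟩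
          rw [prod4]
          have hq' : q = p * r / 2 := by linarith
          norm_num [hq']
          ring_nf
          simp
    · rintro (((hu | ⟨a, ha, rfl⟩) | ⟨a, ha, rfl⟩) | ⟨a, b, ha, hb, rfl⟩)
      · refine ⟨0, 0, 0, le_refl _, le_refl _, le_refl _, by norm_num, by norm_num, ?_⟩
        simp only [C1, Set.mem_singleton_iff] at hu
        rw [hu, hone]
      · exact ⟨a, 0, 0, ha.le, le_refl _, le_refl _, by norm_num, by norm_num, by simp [x1]⟩
      · exact ⟨0, 0, a, le_refl _, le_refl _, ha.le, by norm_num, by norm_num, by simp [x2]⟩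
      · refine ⟨2*a, 2*a*b, 2*b, by linarith, by positivity, by linarith, by nlinarith, by ring, ?_⟩
        rw [prod4]
  all_goals
    rw [Set.disjoint_left]
    rintro u hu1 hu2
  · obtain ⟨a, ha, rfl⟩ := hu2
    simp only [C1, Set.mem_singleton_iff] at hu1
    have := congrFun (congrFun hu1 0) 1
    simp [x1, Matrix.one_apply] at this
    exact ha.ne' this
  · obtain ⟨a, ha, rfl⟩ := hu2
    simp only [C1, Set.mem_singleton_iff] at hu1
    have := congrFun (congrFun hu1 1) 2
    simp [x2, Matrix.one_apply] at this
    exact ha.ne' this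
  · obtain ⟨a, b, ha, hb, rfl⟩ := hu2
    rw [prod4] at hu1
    simp only [C1, Set.mem_singleton_iff] at hu1
    have := congrFun (congrFun hu1 0) 1
    simp [Matrix.one_apply] at this
    nlinarith
  · obtain ⟨a, ha, rfl⟩ := hu1
    obtain ⟨b, hb, hab⟩ := hu2
    have := congrFun (congrFun hab 0) 1
    simp [x1, x2] at this
    exact ha.ne' this
  · obtain ⟨a, ha, rfl⟩ := hu1
    obtain ⟨b, c, hb, hc, hab⟩ := hu2
    rw [prod4] at hab
    have := congrFun (congrFun hab 1) 2
    simp [x1] at this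
    nlinarith
  · obtain ⟨a, ha, rfl⟩ := hu1
    obtain ⟨b, c, hb, hc, hab⟩ := hu2
    rw [prod4] at hab
    have := congrFun (congrFun hab 0) 1
    simp [x2] at this
    nlinarith
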